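/- arXiv:1209.1233 — 5 statements merged into one kernel-verified Lean document; each statement's English description precedes it below -/
import Mathlib

section
/- Let Γ be the line graph of a finite simple connected graph G of order n, and let θ : V → V* be the linear map induced by the symplectic form B of Γ over F₂ (θ(α)(β) = B(α,β)). Then the image θ(V) has dimension n − 1 if n is odd, and dimension n − 2 if n is even. -/
open Matrix

section aux
variable {U : Type} [Fintype U] [DecidableEq U]

-- incidence matrix over ZMod 2
def incMat (G : SimpleGraph U) [DecidableRel G.Adj] : Matrix U G.edgeSet (ZMod 2) :=
  fun u e => if u ∈ (e : Sym2 U) then 1 else 0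

def sumLin : (U → ZMod 2) →ₗ[ZMod 2] ZMod 2 := ∑ u, LinearMap.proj u

lemma sumLin_apply (x : U → ZMod 2) : sumLin x = ∑ u, x u := by
  simp [sumLin]

lemma sum_ite_pair {a b : U} (hab : a ≠ b) (f : U → ZMod 2) :
    ∑ u, (if u ∈ (s(a,b) : Sym2 U) then f u else 0) = f a + f b := by
  rw [← Finset.sum_filter]
  have h : Finset.univ.filter (· ∈ (s(a,b) : Sym2 U)) = {a, b} := by
    ext u; simp [Sym2.mem_iff]
  rw [h, Finset.sum_pair hab]

end aux


section aux2
variable {U : Type} [Fintype U] [DecidableEq U] (G : SimpleGraph U) [DecidableRel G.Adj]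

lemma edge_rep (e : G.edgeSet) : ∃ a b, G.Adj a b ∧ (e : Sym2 U) = s(a,b) := by
  obtain ⟨e, he⟩ := e
  induction e with
  | _ a b => exact ⟨a, b, he, rfl⟩

lemma incMat_mul [DecidableRel (SimpleGraph.lineGraph G).Adj] :
    (incMat G)ᵀ * incMat G = (G.lineGraph).adjMatrix (ZMod 2) := by
  ext e f
  obtain ⟨a, b, hab, he⟩ := edge_rep G e
  rw [Matrix.mul_apply]
  simp only [transpose_apply, incMat]
  have key : ∀ u, (if u ∈ (e:Sym2 U) then (1:ZMod 2) else 0) * (if u ∈ (f:Sym2 U) then 1 else 0)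
      = if u ∈ (s(a,b):Sym2 U) then (if u ∈ (f:Sym2 U) then (1:ZMod 2) else 0) else 0 := by
    intro u; rw [← he]; by_cases h1 : u ∈ (e:Sym2 U) <;> simp [h1]
  rw [Finset.sum_congr rfl (fun u _ => key u), sum_ite_pair hab.ne,
    SimpleGraph.adjMatrix_apply]
  by_cases hef : e = f
  · subst hef
    have haf : a ∈ (e : Sym2 U) := by rw [he]; simp
    have hbf : b ∈ (e : Sym2 U) := by rw [he]; simp
    rw [if_pos haf, if_pos hbf, if_neg (G.lineGraph.irrefl)]; decide
  · by_cases haf : a ∈ (f : Sym2 U) <;> by_cases hbf : b ∈ (f : Sym2 U)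
    · exfalso
      apply hef
      have : (f : Sym2 U) = s(a,b) := (Sym2.mem_and_mem_iff hab.ne).mp ⟨haf, hbf⟩
      exact Subtype.ext (he.trans this.symm)
    · have hadj : (G.lineGraph).Adj e f := by
        rw [SimpleGraph.lineGraph_adj_iff_exists]
        exact ⟨hef, a, by rw [he]; simp, haf⟩
      rw [if_pos haf, if_neg hbf, if_pos hadj]; ring
    · have hadj : (G.lineGraph).Adj e f := by
        rw [SimpleGraph.lineGraph_adj_iff_exists]
        exact ⟨hef, b, by rw [he]; simp, hbf⟩
      rw [if_neg haf, if_pos hbf, if_pos hadj]; ring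
    · have hadj : ¬ (G.lineGraph).Adj e f := by
        rw [SimpleGraph.lineGraph_adj_iff_exists]
        rintro ⟨-, v, hv1, hv2⟩
        rw [he, Sym2.mem_iff] at hv1
        rcases hv1 with rfl | rfl
        exacts [haf hv2, hbf hv2]
      rw [if_neg haf, if_neg hbf, if_neg hadj]; ring

end aux2

section aux3
variable {U : Type} [Fintype U] [DecidableEq U] (G : SimpleGraph U) [DecidableRel G.Adj]

lemma pi_add_self (f : U → ZMod 2) : f + f = 0 := by
  funext v; exact CharTwo.add_self_eq_zero _

lemma single_smul' (u : U) (c : ZMod 2) :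
    c • Pi.single u (1 : ZMod 2) = (Pi.single u c : U → ZMod 2) := by
  funext v
  by_cases h : v = u <;> simp [Pi.single_apply, h]

lemma col_eq {a b : U} (hab : G.Adj a b) :
    (incMat G)ᵀ ⟨s(a,b), G.mem_edgeSet.mpr hab⟩
      = Pi.single a (1:ZMod 2) + (Pi.single b 1 : U → ZMod 2) := by
  funext u
  simp only [transpose_apply, incMat, Pi.add_apply, Sym2.mem_iff, Pi.single_apply]
  by_cases h1 : u = a <;> by_cases h2 : u = b <;>
    simp [h1, h2, hab.ne, hab.ne']

lemma col_mem_range {a b : U} (hab : G.Adj a b) :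
    Pi.single a (1:ZMod 2) + (Pi.single b 1 : U → ZMod 2) ∈ LinearMap.range (incMat G).mulVecLin := by
  rw [Matrix.range_mulVecLin]
  exact Submodule.subset_span ⟨⟨s(a,b), G.mem_edgeSet.mpr hab⟩, col_eq G hab⟩

lemma pair_mem_range {a b : U} (h : G.Reachable a b) :
    Pi.single a (1:ZMod 2) + (Pi.single b 1 : U → ZMod 2) ∈ LinearMap.range (incMat G).mulVecLin := by
  obtain ⟨w⟩ := h
  induction w with
  | nil => rw [pi_add_self]; exact zero_mem _
  | @cons u v w hadj p ih =>
    have h2 : Pi.single u (1:ZMod 2) + (Pi.single w 1 : U → ZMod 2)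
        = (Pi.single u (1:ZMod 2) + (Pi.single v 1 : U → ZMod 2)) + (Pi.single v (1:ZMod 2) + (Pi.single w 1 : U → ZMod 2)) := by
      rw [show (Pi.single u (1:ZMod 2) + (Pi.single v 1 : U → ZMod 2)) + (Pi.single v (1:ZMod 2) + (Pi.single w 1 : U → ZMod 2))
          = Pi.single u (1:ZMod 2) + (Pi.single w 1 : U → ZMod 2) + ((Pi.single v 1 : U → ZMod 2) + (Pi.single v 1 : U → ZMod 2)) by abel,
        pi_add_self, add_zero]
    rw [h2]
    exact add_mem (col_mem_range G hadj) ih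

lemma mulVecT_apply (x : U → ZMod 2) (e : G.edgeSet) {a b : U} (hab : G.Adj a b)
    (he : (e : Sym2 U) = s(a,b)) : ((incMat G)ᵀ *ᵥ x) e = x a + x b := by
  simp only [Matrix.mulVec, dotProduct, transpose_apply, incMat, he, ite_mul, one_mul,
    zero_mul]
  exact sum_ite_pair hab.ne x

lemma hrange (hconn : G.Connected) :
    LinearMap.range (incMat G).mulVecLin = LinearMap.ker sumLin := by
  apply le_antisymm
  · rw [Matrix.range_mulVecLin, Submodule.span_le]
    rintro _ ⟨e, rfl⟩
    obtain ⟨a, b, hab, he⟩ := edge_rep G e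
    have : (incMat G)ᵀ e = Pi.single a (1:ZMod 2) + (Pi.single b 1 : U → ZMod 2) := by
      have he' : e = ⟨s(a,b), G.mem_edgeSet.mpr hab⟩ := Subtype.ext he
      rw [he']; exact col_eq G hab
    rw [SetLike.mem_coe, LinearMap.mem_ker, show (incMat G).col e = _ from this, sumLin_apply]
    simp [Finset.sum_add_distrib, hab.ne]
    decide
  · intro x hx
    have : Nonempty U := hconn.nonempty
    obtain ⟨u₀⟩ := this
    have hx' : ∑ u, x u = 0 := by rw [LinearMap.mem_ker, sumLin_apply] at hx; exact hx
    have hdecomp : x = ∑ u, x u • (Pi.single u (1:ZMod 2) + Pi.single u₀ (1 : ZMod 2)) := by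
      have h1 : ∑ u, x u • (Pi.single u (1:ZMod 2) + Pi.single u₀ (1 : ZMod 2))
          = (∑ u, Pi.single u (x u)) + ((∑ u, x u : ZMod 2) • Pi.single u₀ (1:ZMod 2) : U → ZMod 2) := by
        rw [Finset.sum_smul]
        rw [← Finset.sum_add_distrib]
        congr 1
        funext u
        rw [smul_add, single_smul']
      rw [h1, hx', zero_smul, add_zero, Finset.univ_sum_single]
    rw [hdecomp]
    exact Submodule.sum_mem _ fun u _ =>
      Submodule.smul_mem _ _ (pair_mem_range G (hconn.preconnected u u₀))

lemma hker (hconn : G.Connected) :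
    LinearMap.ker (incMat G)ᵀ.mulVecLin
      = Submodule.span (ZMod 2) {fun _ => (1 : ZMod 2)} := by
  apply le_antisymm
  · intro x hx
    have : Nonempty U := hconn.nonempty
    obtain ⟨u₀⟩ := this
    have hx' : (incMat G)ᵀ *ᵥ x = 0 := hx
    have hadj : ∀ {a b : U}, G.Adj a b → x a = x b := by
      intro a b hab
      have := congr_fun hx' ⟨s(a,b), G.mem_edgeSet.mpr hab⟩
      rw [mulVecT_apply G x _ hab rfl, Pi.zero_apply] at this
      have h2 : ∀ a b : ZMod 2, a + b = 0 → a = b := by decide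
      exact h2 _ _ this
    have hconst : ∀ v, x v = x u₀ := by
      intro v
      obtain ⟨w⟩ := hconn.preconnected v u₀
      induction w with
      | nil => rfl
      | cons h p ih => rw [hadj h]; exact ih
    rw [Submodule.mem_span_singleton]
    exact ⟨x u₀, by funext v; simp [hconst v]⟩
  · rw [Submodule.span_le, Set.singleton_subset_iff]
    rw [SetLike.mem_coe, LinearMap.mem_ker]
    funext e
    obtain ⟨a, b, hab, he⟩ := edge_rep G e
    simp only [Matrix.mulVecLin_apply, Pi.zero_apply]
    rw [mulVecT_apply G _ e hab he]
    exact CharTwo.add_self_eq_zero _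

end aux3

section dot
variable {α : Type} [Fintype α] [DecidableEq α]

def dotL : (α → ZMod 2) →ₗ[ZMod 2] ((α → ZMod 2) →ₗ[ZMod 2] ZMod 2) :=
  LinearMap.mk₂ (ZMod 2) (fun v w => dotProduct v w)
    (fun a b c => add_dotProduct a b c)
    (fun a b c => smul_dotProduct a b c)
    (fun a b c => dotProduct_add a b c)
    (fun a b c => dotProduct_smul a b c)

lemma dotL_apply (v w : α → ZMod 2) : dotL v w = dotProduct v w := rfl

lemma dotL_injective : Function.Injective (dotL : (α → ZMod 2) →ₗ[ZMod 2] _) := by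
  intro v w h
  funext i
  have := congr_fun (congr_arg (fun (f : (α → ZMod 2) →ₗ[ZMod 2] ZMod 2) => f.toFun)
    h) (Pi.single i 1)
  simpa [dotL_apply, dotProduct_single] using this

end dot

set_option maxHeartbeats 1000000 in
set_option synthInstance.maxHeartbeats 400000 in
/-- If `Γ` is the line graph of a finite simple connected graph `G` of order `n`,
and `θ : V → V*` is induced by the adjacency symplectic form of `Γ` over `F₂`, then the image
of `θ` has dimension `n - 1` if `n` is odd and `n - 2` if `n` is even. -/
theorem stmt1 {U : Type} [Fintype U] [DecidableEq U]
    (G : SimpleGraph U) [DecidableRel G.Adj] (hconn : G.Connected)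
    (n : ℕ) (hn : Fintype.card U = n)
    [DecidableRel (SimpleGraph.lineGraph G).Adj] :
    Module.finrank (ZMod 2)
      (LinearMap.range
        (Matrix.toLinearMap₂' (ZMod 2) ((SimpleGraph.lineGraph G).adjMatrix (ZMod 2)) :
          (G.edgeSet → ZMod 2) →ₗ[ZMod 2] (G.edgeSet → ZMod 2) →ₗ[ZMod 2] ZMod 2)) =
      if Odd n then n - 1 else n - 2 := by
  have hNE : Nonempty U := hconn.nonempty
  obtain ⟨u₀⟩ := hNE
  set M := incMat G with hM
  set A := (G.lineGraph).adjMatrix (ZMod 2) with hAdef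
  have hA : A = Mᵀ * M := (incMat_mul G).symm
  have hAT : Aᵀ = A := by rw [hA, Matrix.transpose_mul, Matrix.transpose_transpose]
  -- step 1: toLinearMap₂' A = dotL ∘ Aᵀ.mulVecLin
  have hcomp : (Matrix.toLinearMap₂' (ZMod 2) A :
        (G.edgeSet → ZMod 2) →ₗ[ZMod 2] (G.edgeSet → ZMod 2) →ₗ[ZMod 2] ZMod 2)
      = dotL ∘ₗ Aᵀ.mulVecLin := by
    apply LinearMap.ext; intro x; apply LinearMap.ext; intro y
    rw [Matrix.toLinearMap₂'_apply']
    simp only [LinearMap.comp_apply, Matrix.mulVecLin_apply, dotL_apply]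
    rw [Matrix.mulVec_transpose, ← dotProduct_mulVec]
  rw [hcomp, LinearMap.range_comp]
  -- step 2: remove injective dotL
  have hfr : Module.finrank (ZMod 2)
        (Submodule.map dotL (LinearMap.range Aᵀ.mulVecLin))
      = Module.finrank (ZMod 2) (LinearMap.range Aᵀ.mulVecLin) :=
    (LinearEquiv.finrank_eq
      (Submodule.equivMapOfInjective _ dotL_injective _)).symm
  rw [hfr, hAT, hA, Matrix.mulVecLin_mul]
  -- step 3: rank computation
  set f := M.mulVecLin
  set g := Mᵀ.mulVecLin
  set R := LinearMap.range f with hRdef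
  have hgf : LinearMap.range (g ∘ₗ f) = Submodule.map g R := LinearMap.range_comp _ _
  set g' := g ∘ₗ R.subtype with hg'
  have h1 : LinearMap.range g' = Submodule.map g R := by
    rw [hg', LinearMap.range_comp, Submodule.range_subtype]
  have h2 : LinearMap.ker g' = Submodule.comap R.subtype (LinearMap.ker g) :=
    LinearMap.ker_comp _ _
  have hrn : Module.finrank (ZMod 2) R
      = Module.finrank (ZMod 2) (LinearMap.range g')
        + Module.finrank (ZMod 2) (LinearMap.ker g') :=
    (LinearMap.finrank_range_add_finrank_ker g').symm
  have hkerg' : Module.finrank (ZMod 2) (LinearMap.ker g')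
      = Module.finrank (ZMod 2) (LinearMap.ker g ⊓ R : Submodule (ZMod 2) (U → ZMod 2)) := by
    rw [h2]
    have hme : Module.finrank (ZMod 2) (Submodule.comap R.subtype (LinearMap.ker g))
        = Module.finrank (ZMod 2)
            (Submodule.map R.subtype (Submodule.comap R.subtype (LinearMap.ker g))) :=
      LinearEquiv.finrank_eq (Submodule.equivMapOfInjective _
        (Submodule.injective_subtype R) _)
    rw [hme, Submodule.map_comap_subtype, inf_comm]
  -- finrank R = n - 1 and n = finrank R + 1
  have hsurj : LinearMap.range (sumLin : (U → ZMod 2) →ₗ[ZMod 2] ZMod 2) = ⊤ := by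
    apply LinearMap.range_eq_top.mpr
    intro c
    refine ⟨c • Pi.single u₀ (1 : ZMod 2), ?_⟩
    rw [LinearMap.map_smul, sumLin_apply]
    simp [Finset.sum_pi_single']
  have hR : R = LinearMap.ker sumLin := hrange G hconn
  have hpi : Module.finrank (ZMod 2) (U → ZMod 2) = n := by
    rw [Module.finrank_fintype_fun_eq_card, hn]
  have hdim : n = 1 + Module.finrank (ZMod 2) R := by
    have := LinearMap.finrank_range_add_finrank_ker
      (sumLin : (U → ZMod 2) →ₗ[ZMod 2] ZMod 2)
    rw [hpi, hsurj, finrank_top, Module.finrank_self, ← hR] at this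
    omega
  -- the kernel of g
  have hK : LinearMap.ker g = Submodule.span (ZMod 2) {fun _ => (1 : ZMod 2)} :=
    hker G hconn
  have hone_ne : (fun _ => (1 : ZMod 2)) ≠ (0 : U → ZMod 2) := by
    intro h
    exact one_ne_zero (congr_fun h u₀)
  have hn1 : 1 ≤ n := hn ▸ Fintype.card_pos_iff.mpr ⟨u₀⟩
  have hinf : Module.finrank (ZMod 2)
      (LinearMap.ker g ⊓ R : Submodule (ZMod 2) (U → ZMod 2))
      = if Odd n then 0 else 1 := by
    by_cases hodd : Odd n
    · rw [if_pos hodd]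
      have : LinearMap.ker g ⊓ R = ⊥ := by
        rw [eq_bot_iff]
        intro x hx
        obtain ⟨hxK, hxR⟩ := Submodule.mem_inf.mp hx
        rw [hK, Submodule.mem_span_singleton] at hxK
        obtain ⟨c, rfl⟩ := hxK
        rw [hR, LinearMap.mem_ker, LinearMap.map_smul, sumLin_apply, smul_eq_mul] at hxR
        have hsum : ∑ _u : U, (1 : ZMod 2) = (n : ZMod 2) := by
          rw [Finset.sum_const, Finset.card_univ, hn, nsmul_eq_mul, mul_one]
        rw [hsum] at hxR
        have hne : (n : ZMod 2) ≠ 0 := by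
          rw [Ne, ZMod.natCast_eq_zero_iff]
          rw [Nat.odd_iff] at hodd
          omega
        have hc : c = 0 := by
          rcases mul_eq_zero.mp hxR with h | h
          · exact h
          · exact absurd h hne
        rw [hc, zero_smul]
        exact Submodule.zero_mem ⊥
      rw [this, finrank_bot]
    · rw [if_neg hodd]
      have h1R : (fun _ => (1 : ZMod 2)) ∈ R := by
        rw [hR, LinearMap.mem_ker, sumLin_apply]
        rw [Finset.sum_const, Finset.card_univ, hn, nsmul_eq_mul, mul_one]
        rw [ZMod.natCast_eq_zero_iff]
        rw [Nat.odd_iff] at hodd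
        omega
      have : LinearMap.ker g ⊓ R = LinearMap.ker g := by
        rw [inf_eq_left, hK, Submodule.span_le, Set.singleton_subset_iff]
        exact h1R
      rw [this, hK]
      exact finrank_span_singleton hone_ne
  rw [hgf, ← h1]
  rw [hkerg'] at hrn
  rw [hinf] at hrn
  by_cases hodd : Odd n
  · rw [if_pos hodd] at hrn ⊢
    omega
  · rw [if_neg hodd] at hrn ⊢
    omega
end

section
/- A finite simple connected graph Γ is a nondegenerate line graph (i.e., Γ is a line graph of some connected graph and the adjacency matrix of Γ over F₂ is invertible) if and only if Γ is the line graph of a tree of odd order. -/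
open Matrix

set_option linter.unusedSectionVars false
set_option linter.unusedSectionVars false

open Matrix Finset

namespace Stmt2Aux

variable {U : Type}

open Classical in
/-- Incidence matrix of `G` over `F₂`, with columns indexed by edges. -/
noncomputable def M (G : SimpleGraph U) : Matrix U G.edgeSet (ZMod 2) :=
  Matrix.of fun u e => if u ∈ (e : Sym2 U) then 1 else 0

variable {G : SimpleGraph U}

open Classical in
lemma M_apply (u a b : U) (h : s(a, b) ∈ G.edgeSet) :
    M G u ⟨s(a, b), h⟩ = if u = a ∨ u = b then 1 else 0 := by
  simp [M, Sym2.mem_iff]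

lemma two_eq_zero : (1 + 1 : ZMod 2) = 0 := by decide

lemma char2 : ∀ x : ZMod 2, x + x = 0 := by decide

variable [Fintype U] [Fintype G.edgeSet]

lemma dot_col (f : U → ZMod 2) (a b : U) (h : s(a, b) ∈ G.edgeSet) :
    ∑ u, f u * M G u ⟨s(a, b), h⟩ = f a + f b := by
  classical
  have hab : a ≠ b := (G.mem_edgeSet.mp h).ne
  have : ∀ u, f u * M G u ⟨s(a, b), h⟩ = if u ∈ ({a, b} : Finset U) then f u else 0 := by
    intro u
    rw [M_apply]
    by_cases hu : u = a ∨ u = b <;>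
      simp [hu, Finset.mem_insert, Finset.mem_singleton]
  rw [Finset.sum_congr rfl fun u _ => this u, Finset.sum_ite_mem, Finset.univ_inter,
    Finset.sum_pair hab]

lemma colsum (e : G.edgeSet) : ∑ u, M G u e = 0 := by
  obtain ⟨e, he⟩ := e
  induction e with
  | _ a b =>
    have := dot_col (G := G) (fun _ => (1 : ZMod 2)) a b he
    simpa [two_eq_zero] using this


/-- Row of `Mᵀ *ᵥ x` at an edge. -/
lemma transpose_mulVec_apply (x : U → ZMod 2) (a b : U) (h : s(a, b) ∈ G.edgeSet) :
    ((M G)ᵀ *ᵥ x) ⟨s(a, b), h⟩ = x a + x b := by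
  have := dot_col (G := G) x a b h
  rw [Matrix.mulVec, dotProduct] at *
  simpa [Matrix.transpose_apply, mul_comm] using this

open Classical in
lemma single_mulVec (a b : U) (h : G.Adj a b) :
    M G *ᵥ (fun e => if (e : Sym2 U) = s(a, b) then 1 else 0) =
      fun w => (if w = a then 1 else 0) + (if w = b then 1 else 0) := by
  funext w
  rw [Matrix.mulVec, dotProduct]
  have he : s(a, b) ∈ G.edgeSet := G.mem_edgeSet.mpr h
  rw [Finset.sum_eq_single (⟨s(a, b), he⟩ : G.edgeSet)]
  · rw [if_pos rfl, mul_one, M_apply]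
    have hab : a ≠ b := h.ne
    by_cases hwa : w = a <;> by_cases hwb : w = b <;> simp [hwa, hwb, hab, hab.symm]
  · intro e _ hne
    rw [if_neg, mul_zero]
    intro hval
    exact hne (Subtype.ext hval)
  · intro habs; exact absurd (Finset.mem_univ _) habs

open Classical in
lemma walk_mulVec {u v : U} (p : G.Walk u v) (hp : p.IsTrail) :
    M G *ᵥ (fun e => if (e : Sym2 U) ∈ p.edges then 1 else 0) =
      fun w => (if w = u then 1 else 0) + (if w = v then 1 else 0) := by
  induction p with
  | @nil a =>
    funext w
    rw [Matrix.mulVec, dotProduct]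
    have h0 : ∀ e : G.edgeSet, M G w e * (if (e : Sym2 U) ∈ (SimpleGraph.Walk.nil :
        G.Walk a a).edges then (1 : ZMod 2) else 0) = 0 := by
      intro e; simp
    rw [Finset.sum_congr rfl fun e _ => h0 e, Finset.sum_const_zero]
    by_cases hw : w = a <;> simp [hw, two_eq_zero]
  | @cons a c v hadj p ih =>
    rw [SimpleGraph.Walk.isTrail_cons] at hp
    have hsplit : (fun (e : G.edgeSet) =>
        if (e : Sym2 U) ∈ (SimpleGraph.Walk.cons hadj p).edges then (1 : ZMod 2) else 0) =
        (fun (e : G.edgeSet) => if (e : Sym2 U) = s(a, c) then (1 : ZMod 2) else 0) +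
        (fun (e : G.edgeSet) => if (e : Sym2 U) ∈ p.edges then (1 : ZMod 2) else 0) := by
      funext e
      simp only [SimpleGraph.Walk.edges_cons, List.mem_cons, Pi.add_apply]
      by_cases h1 : (e : Sym2 U) = s(a, c)
      · have h2 : (e : Sym2 U) ∉ p.edges := h1 ▸ hp.2
        simp [h1, h2, hp.2]
      · by_cases h2 : (e : Sym2 U) ∈ p.edges <;> simp [h1, h2]
    rw [hsplit, Matrix.mulVec_add, single_mulVec a c hadj, ih hp.1]
    funext w
    simp only [Pi.add_apply]
    have : ∀ x y z : ZMod 2, x + y + (y + z) = x + z := by decide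
    exact this _ _ _

lemma sum_mulVec (z : G.edgeSet → ZMod 2) : ∑ u, (M G *ᵥ z) u = 0 := by
  simp only [Matrix.mulVec, dotProduct]
  rw [Finset.sum_comm]
  refine Finset.sum_eq_zero fun e _ => ?_
  rw [← Finset.sum_mul, colsum, zero_mul]

lemma ker_eq_zero_of_acyclic (hG : G.IsAcyclic) (z : G.edgeSet → ZMod 2)
    (hz : M G *ᵥ z = 0) : z = 0 := by
  classical
  funext e
  obtain ⟨e, he⟩ := e
  induction e with
  | _ a b =>
  have hbr : G.IsBridge s(a, b) := SimpleGraph.isAcyclic_iff_forall_edge_isBridge.mp hG he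
  set G' := G \ SimpleGraph.fromEdgeSet {s(a, b)} with hG'
  set f : U → ZMod 2 := fun w => if G'.Reachable a w then 1 else 0 with hf
  have hdot : f ⬝ᵥ (M G *ᵥ z) = 0 := by rw [hz, dotProduct_zero]
  rw [Matrix.dotProduct_mulVec] at hdot
  -- the row vector `f ᵥ* M G` vanishes except at our edge
  have hrow : ∀ (e' : G.edgeSet), e' ≠ ⟨s(a, b), he⟩ → (f ᵥ* M G) e' = 0 := by
    rintro ⟨e', he'⟩ hne
    obtain ⟨c, d⟩ := e'
    have hcd : s(c, d) ≠ s(a, b) := fun hcontra => hne (Subtype.ext hcontra)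
    have hG'adj : G'.Adj c d := by
      rw [hG']
      refine ⟨G.mem_edgeSet.mp he', ?_⟩
      rw [SimpleGraph.fromEdgeSet_adj]
      rintro ⟨hmem, -⟩
      exact hcd hmem
    have hfr : f c = f d := by
      have hiff : G'.Reachable a c ↔ G'.Reachable a d :=
        ⟨fun h => h.trans hG'adj.reachable, fun h => h.trans hG'adj.symm.reachable⟩
      simp only [hf]
      by_cases hr : G'.Reachable a c
      · rw [if_pos hr, if_pos (hiff.mp hr)]
      · rw [if_neg hr, if_neg fun h => hr (hiff.mpr h)]
    have hv : (f ᵥ* M G) ⟨s(c, d), he'⟩ = f c + f d := by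
      rw [Matrix.vecMul, dotProduct]
      exact dot_col f c d he'
    rw [hv, hfr, char2]
  have hmain : (f ᵥ* M G) ⟨s(a, b), he⟩ = 1 := by
    rw [Matrix.vecMul, dotProduct, dot_col f a b he]
    have hfa : f a = 1 := by simp only [hf]; rw [if_pos (SimpleGraph.Reachable.refl a)]
    have hfb : f b = 0 := by
      simp only [hf]; rw [if_neg (show ¬ G'.Reachable a b from SimpleGraph.isBridge_iff.mp hbr)]
    rw [hfa, hfb, add_zero]
  rw [dotProduct, Finset.sum_eq_single (⟨s(a, b), he⟩ : G.edgeSet)] at hdot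
  · rw [hmain, one_mul] at hdot
    simpa using hdot
  · intro e' _ hne
    rw [hrow e' hne, zero_mul]
  · intro habs; exact absurd (Finset.mem_univ _) habs


lemma exists_ker_of_not_acyclic (h : ¬ G.IsAcyclic) :
    ∃ z : G.edgeSet → ZMod 2, z ≠ 0 ∧ M G *ᵥ z = 0 := by
  classical
  rw [SimpleGraph.isAcyclic_iff_forall_edge_isBridge] at h
  push_neg at h
  obtain ⟨e, he, hbr⟩ := h
  induction e with
  | _ a b =>
  have hadj : G.Adj a b := G.mem_edgeSet.mp he
  rw [SimpleGraph.isBridge_iff_adj_and_forall_walk_mem_edges] at hbr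
  push_neg at hbr
  obtain ⟨p, hp⟩ := hbr
  set t := p.bypass with ht
  have htrail : t.IsTrail := p.bypass_isPath.isTrail
  have hnt : s(a, b) ∉ t.edges := fun hmem => hp (p.edges_bypass_subset hmem)
  refine ⟨(fun (e : G.edgeSet) => if (e : Sym2 U) ∈ t.edges then (1 : ZMod 2) else 0) +
    (fun (e : G.edgeSet) => if (e : Sym2 U) = s(a, b) then (1 : ZMod 2) else 0), ?_, ?_⟩
  · intro hzero
    have := congrFun hzero ⟨s(a, b), he⟩
    simp only [Pi.add_apply, Pi.zero_apply, if_pos rfl, if_neg hnt, zero_add] at this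
    exact one_ne_zero this
  · rw [Matrix.mulVec_add, walk_mulVec t htrail, single_mulVec a b hadj]
    funext w
    simp only [Pi.add_apply, Pi.zero_apply, char2]

lemma eq_of_reachable {x : U → ZMod 2} (hadj : ∀ ⦃a b : U⦄, G.Adj a b → x a = x b)
    {u v : U} (h : G.Reachable u v) : x u = x v := by
  obtain ⟨p⟩ := h
  induction p with
  | nil => rfl
  | cons h' _ ih => exact (hadj h').trans ih

lemma common_unique {e f : Sym2 U} (hne : e ≠ f) {u v : U}
    (hue : u ∈ e) (huf : u ∈ f) (hve : v ∈ e) (hvf : v ∈ f) : u = v := by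
  by_contra hcon
  exact hne (((Sym2.mem_and_mem_iff hcon).mp ⟨hue, hve⟩).trans
    ((Sym2.mem_and_mem_iff hcon).mp ⟨huf, hvf⟩).symm)

open Classical in
lemma adjL_eq [DecidableRel (G.lineGraph).Adj] :
    (G.lineGraph).adjMatrix (ZMod 2) = (M G)ᵀ * (M G) := by
  ext e f
  rw [Matrix.mul_apply]
  have hterm : ∀ u, (M G)ᵀ e u * M G u f =
      if u ∈ (e : Sym2 U) ∧ u ∈ (f : Sym2 U) then (1 : ZMod 2) else 0 := by
    intro u
    rw [Matrix.transpose_apply]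
    simp only [M, Matrix.of_apply]
    by_cases h1 : u ∈ (e : Sym2 U) <;> by_cases h2 : u ∈ (f : Sym2 U) <;>
      simp [h1, h2]
  rw [Finset.sum_congr rfl fun u _ => hterm u]
  by_cases hef : (G.lineGraph).Adj e f
  · obtain ⟨hne, u₀, hu₀e, hu₀f⟩ := SimpleGraph.lineGraph_adj_iff_exists.mp hef
    have huniq : ∀ u, (u ∈ (e : Sym2 U) ∧ u ∈ (f : Sym2 U)) ↔ u = u₀ := by
      intro u
      constructor
      · rintro ⟨h1, h2⟩
        exact common_unique (fun hv => hne (Subtype.ext hv)) h1 h2 hu₀e hu₀f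
      · rintro rfl; exact ⟨hu₀e, hu₀f⟩
    rw [Finset.sum_congr rfl fun u _ => if_congr (huniq u) rfl rfl,
      Finset.sum_ite_eq' Finset.univ u₀]
    simp [hef]
  · by_cases hne : e = f
    · subst hne
      have : ∀ u, (if u ∈ (e : Sym2 U) ∧ u ∈ (e : Sym2 U) then (1 : ZMod 2) else 0)
          = M G u e := by
        intro u
        simp only [M, Matrix.of_apply, and_self]
      rw [Finset.sum_congr rfl fun u _ => this u, colsum]
      simp [hef]
    · have hnocommon : ∀ u, ¬ (u ∈ (e : Sym2 U) ∧ u ∈ (f : Sym2 U)) := by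
        intro u hu
        exact hef (SimpleGraph.lineGraph_adj_iff_exists.mpr ⟨hne, u, hu.1, hu.2⟩)
      rw [Finset.sum_congr rfl fun u _ => if_neg (hnocommon u), Finset.sum_const_zero]
      simp [hef]


lemma natCast_odd {n : ℕ} (h : Odd n) : (n : ZMod 2) = 1 := by
  obtain ⟨k, rfl⟩ := h
  rw [show ((2 * k + 1 : ℕ) : ZMod 2) = ((k : ZMod 2) + (k : ZMod 2)) + 1 by push_cast; ring,
    char2, zero_add]

lemma natCast_even {n : ℕ} (h : ¬ Odd n) : (n : ZMod 2) = 0 := by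
  rw [Nat.not_odd_iff_even] at h
  obtain ⟨k, rfl⟩ := h
  rw [show ((k + k : ℕ) : ZMod 2) = ((k : ZMod 2) + (k : ZMod 2)) by push_cast; ring, char2]

/-- If `G` is a tree of odd order then `MᵀM` is invertible. -/
lemma isUnit_of_tree_odd [DecidableEq G.edgeSet] (htree : G.IsTree)
    (hodd : Odd (Fintype.card U)) : IsUnit ((M G)ᵀ * M G) := by
  rw [← Matrix.mulVec_injective_iff_isUnit]
  have hker : ∀ z : G.edgeSet → ZMod 2, ((M G)ᵀ * M G) *ᵥ z = 0 → z = 0 := by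
    intro z hz
    rw [← Matrix.mulVec_mulVec] at hz
    set x := M G *ᵥ z with hx
    -- x is constant on edges
    have hconst : ∀ ⦃a b : U⦄, G.Adj a b → x a = x b := by
      intro a b hab
      have he : s(a, b) ∈ G.edgeSet := G.mem_edgeSet.mpr hab
      have := congrFun hz ⟨s(a, b), he⟩
      rw [Pi.zero_apply, transpose_mulVec_apply x a b he] at this
      calc x a = x a + (x a + x b) := by rw [this, add_zero]
        _ = x b := by rw [← add_assoc, char2, zero_add]
    have hne : Nonempty U := by
      by_contra h
      rw [not_nonempty_iff] at h
      rw [Fintype.card_eq_zero] at hodd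
      simpa using hodd
    obtain ⟨u₀⟩ := hne
    have hxconst : ∀ w, x w = x u₀ := fun w =>
      eq_of_reachable hconst (htree.isConnected.preconnected w u₀)
    -- sum of x is 0, but also card • x u₀
    have hsum : ∑ w, x w = 0 := sum_mulVec z
    rw [Finset.sum_congr rfl fun w _ => hxconst w, Finset.sum_const, Finset.card_univ,
      nsmul_eq_mul, natCast_odd hodd, one_mul] at hsum
    have hx0 : x = 0 := by funext w; simpa using (hxconst w).trans hsum
    exact ker_eq_zero_of_acyclic htree.IsAcyclic z (hx ▸ hx0)
  intro y z hyz
  have : ((M G)ᵀ * M G) *ᵥ (y - z) = 0 := by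
    rw [Matrix.mulVec_sub, hyz, sub_self]
  have := hker _ this
  exact sub_eq_zero.mp this

/-- If `MᵀM` is invertible and `G` is connected then `G` is an odd-order tree. -/
lemma tree_odd_of_isUnit [DecidableEq G.edgeSet] (hconn : G.Connected) (hunit : IsUnit ((M G)ᵀ * M G)) :
    G.IsTree ∧ Odd (Fintype.card U) := by
  classical
  have hMinj : ∀ z : G.edgeSet → ZMod 2, M G *ᵥ z = 0 → z = 0 := by
    intro z hz
    have h1 : ((M G)ᵀ * M G) *ᵥ z = 0 := by
      rw [← Matrix.mulVec_mulVec, hz, Matrix.mulVec_zero]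
    have h2 : ((M G)ᵀ * M G) *ᵥ (0 : G.edgeSet → ZMod 2) = 0 := Matrix.mulVec_zero _
    exact Matrix.mulVec_injective_iff_isUnit.mpr hunit (h1.trans h2.symm)
  have hacyclic : G.IsAcyclic := by
    by_contra h
    obtain ⟨z, hz0, hz⟩ := exists_ker_of_not_acyclic h
    exact hz0 (hMinj z hz)
  refine ⟨⟨hconn, hacyclic⟩, ?_⟩
  by_contra hodd
  obtain ⟨u₀⟩ := hconn.nonempty
  -- build a vector mapping to the all-ones vector
  have hpath : ∀ u : U, ∃ z : G.edgeSet → ZMod 2, M G *ᵥ z =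
      fun w => (if w = u₀ then 1 else 0) + (if w = u then 1 else 0) := by
    intro u
    obtain ⟨p⟩ := hconn.preconnected u₀ u
    exact ⟨_, walk_mulVec p.bypass p.bypass_isPath.isTrail⟩
  choose zz hzz using hpath
  set Z : G.edgeSet → ZMod 2 := ∑ u, zz u with hZ
  have hMZ : M G *ᵥ Z = fun _ => 1 := by
    have : M G *ᵥ Z = ∑ u, M G *ᵥ zz u := by
      rw [hZ, ← (M G).mulVecLin_apply, map_sum]
      simp [Matrix.mulVecLin_apply]
    rw [this, Finset.sum_congr rfl fun u _ => hzz u]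
    funext w
    rw [Finset.sum_apply]
    simp only [Finset.sum_add_distrib, Finset.sum_const, Finset.sum_ite_eq Finset.univ w,
      Finset.mem_univ, if_true, Finset.card_univ]
    rw [nsmul_eq_mul, natCast_even hodd, zero_mul, zero_add]
  have htop : (M G)ᵀ *ᵥ (fun _ => (1 : ZMod 2)) = (0 : G.edgeSet → ZMod 2) := by
    funext e
    obtain ⟨e, he⟩ := e
    induction e with
    | _ a b =>
      rw [transpose_mulVec_apply _ a b he, Pi.zero_apply, two_eq_zero]
  have hZ0 : Z = 0 := by
    apply Matrix.mulVec_injective_iff_isUnit.mpr hunit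
    rw [← Matrix.mulVec_mulVec, hMZ, htop, Matrix.mulVec_zero]
  rw [hZ0, Matrix.mulVec_zero] at hMZ
  have h01 := congrFun hMZ u₀
  exact one_ne_zero h01.symm

lemma isUnit_adj_transfer {S T : Type} [Fintype S] [Fintype T] [DecidableEq S] [DecidableEq T]
    (Γ : SimpleGraph S) (Λ : SimpleGraph T) [DecidableRel Γ.Adj] [DecidableRel Λ.Adj]
    (φ : Γ ≃g Λ) : IsUnit (Γ.adjMatrix (ZMod 2)) ↔ IsUnit (Λ.adjMatrix (ZMod 2)) := by
  classical
  have h : Λ.adjMatrix (ZMod 2) = (Γ.adjMatrix (ZMod 2)).submatrix φ.symm.toEquiv φ.symm.toEquiv := by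
    ext i j
    simp [Matrix.submatrix_apply, SimpleGraph.adjMatrix_apply, φ.symm.map_adj_iff]
  rw [Matrix.isUnit_iff_isUnit_det, Matrix.isUnit_iff_isUnit_det, h,
    Matrix.det_submatrix_equiv_self φ.symm.toEquiv]

end Stmt2Aux


/-- A finite simple connected graph `Γ` is a nondegenerate line graph
(i.e. `Γ` is the line graph of some connected graph and its adjacency matrix over `F₂`
is invertible) if and only if `Γ` is the line graph of a tree of odd order. -/
theorem stmt2 {S : Type} [Fintype S] [DecidableEq S]
    (Γ : SimpleGraph S) [DecidableRel Γ.Adj] (hconn : Γ.Connected) :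
    ((∃ (U : Type) (_ : Fintype U) (G : SimpleGraph U),
        G.Connected ∧ Nonempty (Γ ≃g G.lineGraph)) ∧
      IsUnit (Γ.adjMatrix (ZMod 2)))
    ↔ ∃ (U : Type) (_ : Fintype U) (G : SimpleGraph U),
        G.IsTree ∧ Odd (Nat.card U) ∧ Nonempty (Γ ≃g G.lineGraph) := by
  constructor
  · rintro ⟨⟨U, hU, G, hGconn, ⟨φ⟩⟩, hunit⟩
    haveI := hU
    haveI : Fintype G.edgeSet := Fintype.ofEquiv S φ.toEquiv
    classical
    have hunitL : IsUnit ((G.lineGraph).adjMatrix (ZMod 2)) :=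
      (Stmt2Aux.isUnit_adj_transfer Γ G.lineGraph φ).mp hunit
    rw [Stmt2Aux.adjL_eq] at hunitL
    obtain ⟨htree, hodd⟩ := Stmt2Aux.tree_odd_of_isUnit hGconn hunitL
    exact ⟨U, hU, G, htree, by rwa [Nat.card_eq_fintype_card], ⟨φ⟩⟩
  · rintro ⟨U, hU, G, htree, hodd, ⟨φ⟩⟩
    haveI := hU
    haveI : Fintype G.edgeSet := Fintype.ofEquiv S φ.toEquiv
    classical
    refine ⟨⟨U, hU, G, htree.isConnected, ⟨φ⟩⟩, ?_⟩
    have h := Stmt2Aux.isUnit_of_tree_odd htree (by rwa [Nat.card_eq_fintype_card] at hodd)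
    rw [← Stmt2Aux.adjL_eq] at h
    exact (Stmt2Aux.isUnit_adj_transfer Γ G.lineGraph φ).mpr h
end

section
/- Let V be a finite-dimensional F₂-vector space with a nondegenerate symplectic form B, let P be a basis of V, and suppose the graph G(P) (with vertex set P and edges {α,β} when B(α,β)=1) is a tree that is not a path. Then at most one neighbor of any vertex of degree ≥ 3 in G(P) is a leaf; in particular, if α ∈ P has two distinct neighbors β, γ that are both leaves of G(P), then β + γ lies in the radical of B, contradicting nondegeneracy. -/
/-- Let `V` be a finite-dimensional `F₂`-vector space with a nondegenerate
symplectic form `B`, `P` a basis of `V` (indexed by `ι`), and suppose the graph `G(P)`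
(vertices `P`, edges where `B = 1`) is a tree that is not a path. Then any vertex of degree
`≥ 3` has at most one leaf neighbor; and whenever `β, γ` are two distinct leaf neighbors of
a common vertex, `b β + b γ` lies in the radical of `B`. -/
theorem stmt5 {V : Type} {ι : Type} [Fintype ι] [AddCommGroup V] [Module (ZMod 2) V]
    [FiniteDimensional (ZMod 2) V]
    (B : LinearMap.BilinForm (ZMod 2) V)
    (halt : ∀ v : V, B v v = 0)
    (hnd : ∀ v : V, (∀ w : V, B v w = 0) → v = 0)
    (b : Module.Basis ι (ZMod 2) V)
    (GP : SimpleGraph ι) [DecidableRel GP.Adj]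
    (hGP : ∀ i j : ι, GP.Adj i j ↔ i ≠ j ∧ B (b i) (b j) = 1)
    (htree : GP.IsTree)
    (hnotpath : ¬ ∃ n : ℕ, Nonempty (GP ≃g SimpleGraph.pathGraph n)) :
    (∀ i : ι, 3 ≤ GP.degree i →
      ∀ j k : ι, GP.Adj i j → GP.Adj i k → GP.degree j = 1 → GP.degree k = 1 → j = k) ∧
    (∀ i j k : ι, GP.Adj i j → GP.Adj i k → GP.degree j = 1 → GP.degree k = 1 → j ≠ k →
      ∀ w : V, B (b j + b k) w = 0) := by
  classical
  have hzmod : ∀ x y : ZMod 2, x + y = 0 → x = y := by decide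
  have hzmod2 : ∀ x : ZMod 2, x ≠ 1 → x = 0 := by decide
  have hsymm : ∀ u v : V, B u v = B v u := by
    intro u v
    apply hzmod
    have h := halt (u + v)
    simpa [map_add, halt u, halt v, add_comm] using h
  -- unique neighbor of a degree-1 vertex
  have huniq : ∀ (x i : ι), GP.degree x = 1 → GP.Adj x i → ∀ m, GP.Adj x m → m = i := by
    intro x i hx hxi m hxm
    obtain ⟨y, hy⟩ := Finset.card_eq_one.mp
      (by rw [← GP.card_neighborFinset_eq_degree] at hx; exact hx)
    have h1 : i ∈ GP.neighborFinset x := by simpa using hxi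
    have h2 : m ∈ GP.neighborFinset x := by simpa using hxm
    rw [hy, Finset.mem_singleton] at h1 h2
    rw [h1, h2]
  -- value of B on a leaf's basis vector
  have hval : ∀ (i x : ι), GP.degree x = 1 → GP.Adj i x →
      ∀ m, B (b x) (b m) = if m = i then 1 else 0 := by
    intro i x hx hix m
    by_cases hmi : m = i
    · subst hmi
      simp only [if_pos rfl]
      rw [hsymm]
      exact ((hGP m x).mp hix).2
    · rw [if_neg hmi]
      by_cases hmx : m = x
      · subst hmx; exact halt _
      · apply hzmod2
        intro hone
        have hadj : GP.Adj x m := (hGP x m).mpr ⟨fun h => hmx h.symm, hone⟩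
        exact hmi (huniq x i hx hix.symm m hadj)
  have key : ∀ i j k : ι, GP.Adj i j → GP.Adj i k → GP.degree j = 1 → GP.degree k = 1 →
      j ≠ k → ∀ w : V, B (b j + b k) w = 0 := by
    intro i j k hij hik hdj hdk hjk w
    have hmap : (B (b j + b k)) = (0 : V →ₗ[ZMod 2] ZMod 2) := by
      apply b.ext
      intro m
      simp only [map_add, LinearMap.add_apply, LinearMap.zero_apply]
      rw [hval i j hdj hij m, hval i k hdk hik m]
      split_ifs <;> decide
    rw [hmap]
    rfl
  refine ⟨?_, key⟩
  intro i _ j k hij hik hdj hdk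
  by_contra hjk
  have h0 := hnd _ (key i j k hij hik hdj hdk hjk)
  have hneg : -(b k) = b k := by
    have hone : (-1 : ZMod 2) = 1 := by decide
    rw [← neg_one_smul (ZMod 2) (b k), hone, one_smul]
  have : b j = b k := by
    have h1 : b j = -(b k) := by rw [eq_neg_iff_add_eq_zero]; exact h0
    rw [h1, hneg]
  exact hjk (b.injective this)
end

section
/- Let Γ = (S,R) be a finite simple connected bipartite nondegenerate graph that is not a path, and suppose some vertex s ∈ S has even degree. Then there exists t ∈ S such that Q(α_t^∨) = 1 and t' ∈ S with Q(α_{t'}^∨) = 0, where Q is the quadratic form with Q(α_u) = 1 for all u ∈ S and polarization B; consequently the restriction of Q to the dual basis {α_u^∨ : u ∈ S} is surjective. -/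
open Matrix

/-- Let `Γ` be a finite simple connected bipartite nondegenerate graph that
is not a path, and suppose some vertex has even degree. Then with `Q` the quadratic form
with `Q(α_u) = 1` for all `u` and polarization `B`, some dual basis vector has `Q`-value 1
and some has `Q`-value 0; i.e. `Q` restricted to the dual basis is surjective. -/
theorem stmt17 {S : Type} [Fintype S] [DecidableEq S]
    (Γ : SimpleGraph S) [DecidableRel Γ.Adj] (hconn : Γ.Connected)
    (c : S → Bool) (hc : ∀ s t : S, Γ.Adj s t → c s ≠ c t)
    (hA : IsUnit (Γ.adjMatrix (ZMod 2)))
    (hnotpath : ¬ ∃ n : ℕ, Nonempty (Γ ≃g SimpleGraph.pathGraph n))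
    (B : (S → ZMod 2) → (S → ZMod 2) → ZMod 2)
    (hB : ∀ v w, B v w = v ⬝ᵥ (Γ.adjMatrix (ZMod 2)) *ᵥ w)
    (d : S → S → ZMod 2)
    (hd : ∀ s t : S, B (d s) (Pi.single t 1) = if s = t then 1 else 0)
    (Q : (S → ZMod 2) → ZMod 2)
    (hQpolar : ∀ x y : S → ZMod 2, Q (x + y) = Q x + Q y + B x y)
    (hQone : ∀ u : S, Q (Pi.single u 1) = 1)
    (s : S) (heven : Even (Γ.degree s)) :
    (∃ t : S, Q (d t) = 1) ∧ (∃ t' : S, Q (d t') = 0) := by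
  classical
  set A := Γ.adjMatrix (ZMod 2) with hAdef
  have hdet : IsUnit A.det := (Matrix.isUnit_iff_isUnit_det A).mp hA
  have hinj : Function.Injective A.mulVec := by
    intro x y h
    have h2 : A⁻¹ *ᵥ (A *ᵥ x) = A⁻¹ *ᵥ (A *ᵥ y) := by rw [h]
    simpa [Matrix.mulVec_mulVec, Matrix.nonsing_inv_mul A hdet] using h2
  -- A *ᵥ d v = Pi.single v 1
  have hAd : ∀ v, A *ᵥ d v = Pi.single v 1 := by
    intro v
    funext t
    have h1 := hd v t
    rw [hB] at h1
    have h2 : d v ⬝ᵥ A *ᵥ (Pi.single t 1) = (A *ᵥ d v) t := by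
      rw [Matrix.dotProduct_mulVec]
      rw [dotProduct_single, mul_one]
      simp only [Matrix.vecMul, Matrix.mulVec, dotProduct]
      apply Finset.sum_congr rfl
      intro j _
      rw [mul_comm]
      congr 1
      simp [hAdef, SimpleGraph.adjMatrix_apply, Γ.adj_comm]
    rw [h2] at h1
    rw [h1, Pi.single_apply]
    simp [eq_comm]
  -- bipartite support of dual basis vectors
  have hsupp : ∀ v u : S, c u = c v → d v u = 0 := by
    intro v u hcu
    set w : S → ZMod 2 := fun j => if c j = c v then d v j else 0 with hw
    have hw0 : A *ᵥ w = 0 := by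
      funext x
      by_cases hx : c x = c v
      · simp only [Matrix.mulVec, dotProduct, Pi.zero_apply]
        apply Finset.sum_eq_zero
        intro j _
        by_cases hj : c j = c v
        · have hadj : ¬ Γ.Adj x j := fun h => hc x j h (hx.trans hj.symm)
          simp [hAdef, hadj]
        · simp [hw, hj]
      · have hxv : x ≠ v := fun h => hx (by rw [h])
        have h3 : (A *ᵥ w) x = (A *ᵥ d v) x := by
          simp only [Matrix.mulVec, dotProduct]
          apply Finset.sum_congr rfl
          intro j _
          by_cases hj : c j = c v
          · simp [hw, hj]
          · have hadj : ¬ Γ.Adj x j := by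
              intro h
              have := hc x j h
              cases hcx : c x <;> cases hcj : c j <;> cases hcv : c v <;> simp_all
            simp [hAdef, hadj]
        rw [h3, hAd v]
        simp [Pi.single_apply, hxv]
    have hwz : w = 0 := by
      apply hinj
      rw [hw0, Matrix.mulVec_zero]
    have h4 : w u = 0 := by rw [hwz]; rfl
    simpa [hw, hcu] using h4
  -- cross terms vanish
  have hcross : ∀ t v : S, c t = c v → B (d t) (d v) = 0 := by
    intro t v htv
    rw [hB, hAd v, dotProduct_single, mul_one]
    exact hsupp t v htv.symm
  -- basic facts about B and Q
  have hB0 : ∀ x, B x 0 = 0 := by intro x; simp [hB]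
  have hQ0 : Q 0 = 0 := by
    simpa [hB0, CharTwo.add_self_eq_zero] using hQpolar 0 0
  have hBsum : ∀ (x : S → ZMod 2) (T : Finset S), B x (∑ t ∈ T, d t) = ∑ t ∈ T, B x (d t) := by
    intro x T
    induction T using Finset.induction with
    | empty => simpa using hB0 x
    | @insert a T ha ih =>
      rw [Finset.sum_insert ha, Finset.sum_insert ha, ← ih]
      simp [hB, Matrix.mulVec_add, dotProduct_add]
  set N := Γ.neighborFinset s with hN
  have hcN : ∀ t ∈ N, c t ≠ c s := by
    intro t ht
    have : Γ.Adj s t := by rwa [hN, SimpleGraph.mem_neighborFinset] at ht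
    exact fun h => hc s t this h.symm
  -- Q is additive on sums of dual vectors indexed by N-subsets
  have key : ∀ T : Finset S, T ⊆ N → Q (∑ t ∈ T, d t) = ∑ t ∈ T, Q (d t) := by
    intro T
    induction T using Finset.induction with
    | empty => intro _; simpa using hQ0
    | @insert a T ha ih =>
      intro hsub
      have haN : a ∈ N := hsub (Finset.mem_insert_self a T)
      have hTN : T ⊆ N := fun x hx => hsub (Finset.mem_insert_of_mem hx)
      rw [Finset.sum_insert ha, Finset.sum_insert ha, hQpolar, ih hTN, hBsum]
      have : ∑ t ∈ T, B (d a) (d t) = 0 := by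
        apply Finset.sum_eq_zero
        intro t ht
        apply hcross
        have h1 := hcN a haN
        have h2 := hcN t (hTN ht)
        cases hca : c a <;> cases hct : c t <;> cases hcs : c s <;> simp_all
      rw [this, add_zero]
  -- ∑ over N of d t equals e_s
  have hsum_single : ∑ t ∈ N, d t = Pi.single s 1 := by
    apply hinj
    have h1 : A *ᵥ (∑ t ∈ N, d t) = ∑ t ∈ N, A *ᵥ d t := by
      simp only [← Matrix.mulVecLin_apply]
      exact map_sum A.mulVecLin d N
    rw [h1]
    funext u
    rw [Finset.sum_apply]
    simp only [hAd]
    rw [Finset.sum_congr rfl (fun t _ => Pi.single_apply t (1 : ZMod 2) u)]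
    rw [Finset.sum_ite_eq N u (fun _ => (1 : ZMod 2))]
    simp only [Matrix.mulVec_single, mul_one]
    rw [hN]
    simp [hAdef, SimpleGraph.adjMatrix_apply, SimpleGraph.mem_neighborFinset, Γ.adj_comm]
  have hsumQ : ∑ t ∈ N, Q (d t) = 1 := by
    rw [← key N (le_refl N), hsum_single, hQone]
  have h01 : ∀ a : ZMod 2, a ≠ 1 → a = 0 := by decide
  have h10 : ∀ a : ZMod 2, a ≠ 0 → a = 1 := by decide
  constructor
  · by_contra h
    push_neg at h
    have : ∑ t ∈ N, Q (d t) = 0 := Finset.sum_eq_zero fun t _ => h01 _ (h t)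
    rw [hsumQ] at this
    exact one_ne_zero this
  · by_contra h
    push_neg at h
    have hall : ∑ t ∈ N, Q (d t) = (N.card : ZMod 2) := by
      rw [Finset.sum_congr rfl (fun t _ => h10 _ (h t))]
      simp
    have hevenN : Even N.card := heven
    have hcard0 : (N.card : ZMod 2) = 0 := by
      obtain ⟨k, hk⟩ := hevenN
      rw [hk]
      push_cast
      exact CharTwo.add_self_eq_zero _
    rw [hsumQ] at hall
    rw [hcard0] at hall
    exact one_ne_zero hall
end

section
/- Let Γ = (S,R) be a finite simple connected bipartite nondegenerate graph in which every vertex has odd degree. Then Q(α_s^∨) = 1 for every s ∈ S, where Q is the quadratic form with Q(α_u) = 1 for all u and polarization equal to the adjacency symplectic form B, and {α_s^∨} is the dual basis. -/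
open Matrix

/-- Let `Γ` be a finite simple connected bipartite nondegenerate graph in
which every vertex has odd degree. Then `Q(α_s^∨) = 1` for every vertex `s`, where `Q` is
the quadratic form with `Q(α_u) = 1` for all `u` and polarization the adjacency symplectic
form `B`, and `{α_s^∨}` is the dual basis. -/
theorem stmt18 {S : Type} [Fintype S] [DecidableEq S]
    (Γ : SimpleGraph S) [DecidableRel Γ.Adj] (hconn : Γ.Connected)
    (c : S → Bool) (hc : ∀ s t : S, Γ.Adj s t → c s ≠ c t)
    (hA : IsUnit (Γ.adjMatrix (ZMod 2)))
    (hodd : ∀ s : S, Odd (Γ.degree s))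
    (B : (S → ZMod 2) → (S → ZMod 2) → ZMod 2)
    (hB : ∀ v w, B v w = v ⬝ᵥ (Γ.adjMatrix (ZMod 2)) *ᵥ w)
    (d : S → S → ZMod 2)
    (hd : ∀ s t : S, B (d s) (Pi.single t 1) = if s = t then 1 else 0)
    (Q : (S → ZMod 2) → ZMod 2)
    (hQpolar : ∀ x y : S → ZMod 2, Q (x + y) = Q x + Q y + B x y)
    (hQone : ∀ u : S, Q (Pi.single u 1) = 1) :
    ∀ s : S, Q (d s) = 1 := by
  set A := Γ.adjMatrix (ZMod 2) with hAdef
  have hz2 : ∀ x : ZMod 2, x = 0 ∨ x = 1 := by decide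
  -- B basics
  have hB0 : ∀ x, B x 0 = 0 := by intro x; simp [hB]
  have hBadd : ∀ x y z, B x (y + z) = B x y + B x z := by
    intro x y z; simp [hB, Matrix.mulVec_add, dotProduct_add]
  have hBsum : ∀ (x : S → ZMod 2) (F : Finset S) (g : S → (S → ZMod 2)),
      B x (∑ t ∈ F, g t) = ∑ t ∈ F, B x (g t) := by
    intro x F g
    induction F using Finset.cons_induction with
    | empty => simpa using hB0 x
    | cons a F ha ih => rw [Finset.sum_cons, Finset.sum_cons, hBadd, ih]
  -- Q basics
  have hQ0 : Q 0 = 0 := by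
    have h := hQpolar 0 0
    rw [add_zero, hB0, add_zero] at h
    exact (left_eq_add.mp h)
  have hQsingle : ∀ (t : S) (x : ZMod 2), Q (Pi.single t x) = x := by
    intro t x
    rcases hz2 x with h | h <;> subst h
    · simpa using hQ0
    · exact hQone t
  -- Q of an orthogonal sum
  have key : ∀ (F : Finset S) (g : S → (S → ZMod 2)),
      (∀ t ∈ F, ∀ u ∈ F, t ≠ u → B (g t) (g u) = 0) →
      Q (∑ t ∈ F, g t) = ∑ t ∈ F, Q (g t) := by
    intro F
    induction F using Finset.cons_induction with
    | empty => intro g _; simpa using hQ0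
    | cons a F ha ih =>
      intro g hg
      rw [Finset.sum_cons, Finset.sum_cons, hQpolar, hBsum,
        ih g (fun t ht u hu htu =>
          hg t (Finset.mem_cons_of_mem ht) u (Finset.mem_cons_of_mem hu) htu)]
      have : ∑ t ∈ F, B (g a) (g t) = 0 := by
        apply Finset.sum_eq_zero
        intro t ht
        exact hg a (Finset.mem_cons_self a F) t (Finset.mem_cons_of_mem ht)
          (fun h => ha (h ▸ ht))
      rw [this, add_zero]
  -- A *ᵥ d s = Pi.single s 1
  have hbool : ∀ a b e : Bool, a ≠ e → b ≠ e → a = b := by decide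
  have hAsymm : ∀ t u, A t u = A u t := by
    intro t u
    simp only [hAdef, SimpleGraph.adjMatrix_apply]
    by_cases h : Γ.Adj t u
    · simp [h, h.symm]
    · rw [if_neg h, if_neg (fun h' : Γ.Adj u t => h h'.symm)]
  have hAd : ∀ s : S, A *ᵥ d s = Pi.single s 1 := by
    intro s
    funext t
    have h := hd s t
    rw [hB] at h
    rw [Matrix.mulVec_single_one, Matrix.col_apply'] at h
    simp only [dotProduct, mul_one] at h
    have : (A *ᵥ d s) t = ∑ u, d s u * A u t := by
      simp only [Matrix.mulVec, dotProduct]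
      exact Finset.sum_congr rfl fun u _ => by rw [hAsymm t u, mul_comm]
    rw [this, h]
    rcases eq_or_ne s t with h' | h'
    · subst h'; simp
    · simp [Pi.single_apply, h', Ne.symm h']
  -- adjacency entries vanish between equal colors
  have hAzero : ∀ t u : S, c t = c u → A t u = 0 := by
    intro t u h
    simp only [hAdef, SimpleGraph.adjMatrix_apply, ite_eq_right_iff]
    intro hadj
    exact absurd h (hc t u hadj)
  -- support of d s avoids color c s
  have hsupp : ∀ s t : S, c t = c s → d s t = 0 := by
    intro s t hct
    set v : S → ZMod 2 := fun u => if c u = c s then d s u else 0 with hv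
    have hAv : A *ᵥ v = 0 := by
      funext u
      simp only [Matrix.mulVec, dotProduct, Pi.zero_apply]
      by_cases hu : c u = c s
      · apply Finset.sum_eq_zero
        intro x _
        by_cases hx : c x = c s
        · rw [hAzero u x (hu.trans hx.symm), zero_mul]
        · simp [hv, hx]
      · have : ∑ x, A u x * v x = ∑ x, A u x * d s x := by
          apply Finset.sum_congr rfl
          intro x _
          by_cases hx : c x = c s
          · simp [hv, hx]
          · have hcx : c x = c u := hbool (c x) (c u) (c s) hx hu
            rw [hAzero u x hcx.symm]
            ring
        rw [this]
        have := congrFun (hAd s) u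
        simp only [Matrix.mulVec, dotProduct] at this
        rw [this, Pi.single_apply]
        have : u ≠ s := fun h => hu (h ▸ rfl)
        simp [this]
    obtain ⟨U, hU⟩ := hA
    have hinv : (↑U⁻¹ : Matrix S S (ZMod 2)) * A = 1 := by
      rw [← hU]; exact U.inv_mul
    have hv0 : v = 0 := by
      calc v = (1 : Matrix S S (ZMod 2)) *ᵥ v := by rw [Matrix.one_mulVec]
        _ = (↑U⁻¹ : Matrix S S (ZMod 2)) *ᵥ (A *ᵥ v) := by
            rw [Matrix.mulVec_mulVec, hinv]
        _ = 0 := by rw [hAv, Matrix.mulVec_zero]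
    have h2 : (if c t = c s then d s t else 0) = 0 := congrFun hv0 t
    rwa [if_pos hct] at h2
  -- column sums of A are 1
  have hcol : ∀ u : S, ∑ t, A t u = 1 := by
    intro u
    have h1 : ∑ t, A u t = (Γ.degree u : ZMod 2) := by
      have h2 := Γ.adjMatrix_dotProduct (α := ZMod 2) u (fun _ => 1)
      simp only [dotProduct, mul_one] at h2
      rw [h2, Finset.sum_const, SimpleGraph.degree, nsmul_eq_mul, mul_one]
    have h3 : ∑ t, A t u = ∑ t, A u t :=
      Finset.sum_congr rfl (fun t _ => hAsymm t u)
    rw [h3, h1, ZMod.natCast_eq_one_iff_odd]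
    exact hodd u
  intro s
  -- total sum of d s is 1
  have hsum : ∑ t, d s t = 1 := by
    have h1 : ∑ t, (A *ᵥ d s) t = 1 := by
      rw [hAd s]
      simp
    have h2 : ∑ t, (A *ᵥ d s) t = ∑ u, (∑ t, A t u) * d s u := by
      simp only [Matrix.mulVec, dotProduct]
      rw [Finset.sum_comm]
      simp [Finset.sum_mul]
    rw [h2] at h1
    calc ∑ t, d s t = ∑ u, (∑ t, A t u) * d s u := by
          apply Finset.sum_congr rfl
          intro u _
          rw [hcol u, one_mul]
      _ = 1 := h1
  -- conclude
  have hds : d s = ∑ t, Pi.single t (d s t) := (Finset.univ_sum_single (d s)).symm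
  rw [hds, key]
  · simp only [hQsingle]
    exact hsum
  · intro t _ u _ htu
    rw [hB, Matrix.mulVec_single]
    rcases hz2 (d s t) with h | h
    · simp [h]
    · rcases hz2 (d s u) with h' | h'
      · simp [h']
      · have hct : c t ≠ c s := fun hh => by
          have := hsupp s t hh; rw [this] at h; exact one_ne_zero h.symm
        have hcu : c u ≠ c s := fun hh => by
          have := hsupp s u hh; rw [this] at h'; exact one_ne_zero h'.symm
        have hctu : c t = c u := hbool (c t) (c u) (c s) hct hcu
        simp only [dotProduct, Pi.single_apply]
        apply Finset.sum_eq_zero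
        intro x _
        by_cases hx : x = t
        · subst hx
          rw [Pi.smul_apply, Matrix.col_apply, hAzero x u hctu, smul_zero]
          ring
        · simp [hx]
end
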